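/- Let a ∈ (0,1), p > 0, p' ∈ ℝ, R ∈ ℝ, and c > 0. Set L := −ln a > 0 and m := min{1,c}·p, and define F := −a^p·(−p'·L + p·R) and F_c := −a^{c·p}·(−c·p'·L + c·p·R). Then |F_c − F| ≤ (|c−1|/e)·[ (p/m)·(|p'|·L + p·|R|) + |p'|/m + (p/(L·m))·|R| ]. -/

import Mathlib

open Real

private lemma abs_exp_sub_exp_le' (x y : ℝ) :
    |Real.exp x - Real.exp y| ≤ |x - y| * Real.exp (max x y) := by
  wlog h : y ≤ x generalizing x y
  · rw [abs_sub_comm, abs_sub_comm x y, max_comm]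
    exact this y x (le_of_not_ge h)
  · have hx : max x y = x := max_eq_left h
    rw [hx, abs_of_nonneg (sub_nonneg.2 (Real.exp_le_exp.2 h)),
        abs_of_nonneg (sub_nonneg.2 h)]
    have h1 : (y - x) + 1 ≤ Real.exp (y - x) := Real.add_one_le_exp _
    have h2 : Real.exp (y - x) * Real.exp x = Real.exp y := by
      rw [← Real.exp_add]; ring_nf
    nlinarith [Real.exp_pos x, Real.exp_pos y]

private lemma mul_exp_neg_le (t : ℝ) : t * Real.exp (-t) ≤ Real.exp (-1) := by
  have h1 : t ≤ Real.exp (t - 1) := by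
    have := Real.add_one_le_exp (t - 1); linarith
  have h2 : Real.exp (t - 1) * Real.exp (-t) = Real.exp (-1) := by
    rw [← Real.exp_add]; ring_nf
  nlinarith [Real.exp_pos (-t)]

/-- Pointwise control of `f'_c − f'` when the detection threshold `p` is
scaled by a factor `c > 0`.  Here `a ∈ (0,1)`, `L = −ln a`, `m = min{1,c}·p`,
`F = −a^p(−p'L + pR)` and `F_c = −a^{cp}(−cp'L + cpR)`. -/
theorem msce_pointwise_scaling_bound
    (a p p' R c : ℝ) (ha : a ∈ Set.Ioo (0 : ℝ) 1) (hp : 0 < p) (hc : 0 < c) :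
    |(-(a ^ (c * p)) * (-(c * p') * (-Real.log a) + (c * p) * R)) -
      (-(a ^ p) * (-p' * (-Real.log a) + p * R))| ≤
    (|c - 1| / Real.exp 1) *
      ((p / (min 1 c * p)) * (|p'| * (-Real.log a) + p * |R|) +
        |p'| / (min 1 c * p) +
        (p / ((-Real.log a) * (min 1 c * p))) * |R|) := by
  obtain ⟨ha0, ha1⟩ := ha
  set L : ℝ := -Real.log a with hLdef
  have hL : 0 < L := by
    have := Real.log_neg ha0 ha1
    simp [hLdef]; linarith
  set m : ℝ := min 1 c * p with hmdef
  have hm : 0 < m := mul_pos (lt_min one_pos hc) hp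
  -- rewrite rpow as exp
  have hrpow : ∀ x : ℝ, a ^ x = Real.exp (-(x * L)) := by
    intro x
    rw [Real.rpow_def_of_pos ha0]
    ring_nf
    congr 1; rw [hLdef]; ring
  set A : ℝ := Real.exp (-(c * p * L)) with hAdef
  set B : ℝ := Real.exp (-(p * L)) with hBdef
  set M : ℝ := Real.exp (-(m * L)) with hMdef
  have hApos : 0 < A := Real.exp_pos _
  have hMpos : 0 < M := Real.exp_pos _
  -- min of exponents
  have hmin : min (c * p) p = m := by
    rw [hmdef, min_comm (1:ℝ) c, min_mul_of_nonneg _ _ hp.le, one_mul]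
  -- MVT-style bound
  have hAB : |A - B| ≤ |c - 1| * p * (L * M) := by
    have h := abs_exp_sub_exp_le' (-(c * p * L)) (-(p * L))
    have hmax : max (-(c * p * L)) (-(p * L)) = -(m * L) := by
      rw [← hmin]
      rcases le_total (c * p) p with h' | h'
      · rw [min_eq_left h', max_eq_left (by nlinarith)]
      · rw [min_eq_right h', max_eq_right (by nlinarith)]
    rw [hmax] at h
    have habs : |(-(c * p * L)) - (-(p * L))| = |c - 1| * p * L := by
      rw [show (-(c * p * L)) - (-(p * L)) = (1 - c) * (p * L) by ring,
          abs_mul, abs_of_pos (mul_pos hp hL), abs_sub_comm]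
      ring
    calc |A - B| ≤ |(-(c * p * L)) - (-(p * L))| * M := h
      _ = |c - 1| * p * (L * M) := by rw [habs]; ring
  -- t e^{-t} ≤ 1/e with t = m L
  have hkey : m * L * M ≤ Real.exp (-1) := mul_exp_neg_le (m * L)
  have hLM : L * M ≤ Real.exp (-1) / m := by
    rw [le_div_iff₀ hm]; nlinarith
  have hM' : M ≤ Real.exp (-1) / (m * L) := by
    rw [le_div_iff₀ (mul_pos hm hL)]; nlinarith
  -- A ≤ M
  have hAM : A ≤ M := by
    apply Real.exp_le_exp.2
    have : m ≤ c * p := by rw [← hmin]; exact min_le_left _ _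
    nlinarith
  -- bound on S
  set S : ℝ := -p' * L + p * R with hSdef
  have hS : |S| ≤ |p'| * L + p * |R| := by
    calc |S| ≤ |(-p') * L| + |p * R| := abs_add_le _ _
      _ = |p'| * L + p * |R| := by
          rw [abs_mul, abs_mul, abs_neg, abs_of_pos hL, abs_of_pos hp]
  have hSnn : (0:ℝ) ≤ |p'| * L + p * |R| := le_trans (abs_nonneg S) hS
  -- decomposition
  have hdecomp : (-(a ^ (c * p)) * (-(c * p') * L + (c * p) * R)) -
      (-(a ^ p) * (-p' * L + p * R)) = -(A - B) * S - (c - 1) * A * S := by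
    rw [hrpow (c * p), hrpow p, ← hAdef, ← hBdef, hSdef]; ring
  rw [hdecomp]
  have hstep : |(-(A - B)) * S - (c - 1) * A * S| ≤
      |A - B| * |S| + |c - 1| * A * |S| := by
    calc |(-(A - B)) * S - (c - 1) * A * S|
        ≤ |(-(A - B)) * S| + |(c - 1) * A * S| := abs_sub _ _
      _ = |A - B| * |S| + |c - 1| * A * |S| := by
          rw [abs_mul, abs_neg, abs_mul, abs_mul, abs_of_pos hApos]
  refine hstep.trans ?_
  have hexp1 : Real.exp (-1) = 1 / Real.exp 1 := by
    rw [Real.exp_neg]; ring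
  have e1pos := Real.exp_pos (1:ℝ)
  -- term 1
  have ht1 : |A - B| * |S| ≤ |c - 1| / Real.exp 1 * (p / m * (|p'| * L + p * |R|)) := by
    calc |A - B| * |S| ≤ (|c - 1| * p * (L * M)) * (|p'| * L + p * |R|) := by
          apply mul_le_mul hAB hS (abs_nonneg _)
          positivity
      _ ≤ (|c - 1| * p * (Real.exp (-1) / m)) * (|p'| * L + p * |R|) := by
          apply mul_le_mul_of_nonneg_right _ hSnn
          apply mul_le_mul_of_nonneg_left hLM (by positivity)
      _ = |c - 1| / Real.exp 1 * (p / m * (|p'| * L + p * |R|)) := by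
          rw [hexp1]; field_simp
  -- term 2
  have ht2 : |c - 1| * A * |S| ≤
      |c - 1| / Real.exp 1 * (|p'| / m + p / (L * m) * |R|) := by
    calc |c - 1| * A * |S| ≤ |c - 1| * M * (|p'| * L + p * |R|) := by
          apply mul_le_mul _ hS (abs_nonneg _) (by positivity)
          exact mul_le_mul_of_nonneg_left hAM (abs_nonneg _)
      _ = |c - 1| * (|p'| * (L * M) + p * |R| * M) := by ring
      _ ≤ |c - 1| * (|p'| * (Real.exp (-1) / m) + p * |R| * (Real.exp (-1) / (m * L))) := by
          apply mul_le_mul_of_nonneg_left _ (abs_nonneg _)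
          have := mul_le_mul_of_nonneg_left hLM (abs_nonneg p')
          have := mul_le_mul_of_nonneg_left hM' (by positivity : (0:ℝ) ≤ p * |R|)
          linarith
      _ = |c - 1| / Real.exp 1 * (|p'| / m + p / (L * m) * |R|) := by
          rw [hexp1]; field_simp
  calc |A - B| * |S| + |c - 1| * A * |S|
      ≤ |c - 1| / Real.exp 1 * (p / m * (|p'| * L + p * |R|)) +
        |c - 1| / Real.exp 1 * (|p'| / m + p / (L * m) * |R|) := add_le_add ht1 ht2
    _ = |c - 1| / Real.exp 1 *
        (p / m * (|p'| * L + p * |R|) + |p'| / m + p / (L * m) * |R|) := by ring
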